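/- Let f : ℝ^M → ℝ be C¹ and satisfy the Lojasiewicz gradient inequality at w* with exponent α ∈ (1/2, 1): |f(w) - f(w*)|^α ≤ C‖∇f(w)‖ on a ball B around w*. If w(t) solves w'(t) = -∇f(w(t)), stays in B, and f(w(t)) > f(w*) for all t ≥ 0, then f(w(t)) - f(w*) ≤ K · t^(-1/(2α-1)) for some constant K > 0 and all t ≥ 1. -/

import Mathlib

/-- Lojasiewicz inequality with exponent `α ∈ (1/2, 1)` gives algebraic decay of the loss
along the gradient flow. -/
theorem stmt2 {M : ℕ} (f : EuclideanSpace ℝ (Fin M) → ℝ)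
    (wstar : EuclideanSpace ℝ (Fin M)) (α C r : ℝ)
    (hα : α ∈ Set.Ioo (1 / 2 : ℝ) 1) (hC : 0 < C) (hr : 0 < r)
    (hf : ContDiff ℝ 1 f)
    (hLI : ∀ v ∈ Metric.ball wstar r,
      |f v - f wstar| ^ α ≤ C * ‖gradient f v‖)
    (w : ℝ → EuclideanSpace ℝ (Fin M))
    (hflow : ∀ t, 0 ≤ t → HasDerivAt w (-(gradient f (w t))) t)
    (hball : ∀ t, 0 ≤ t → w t ∈ Metric.ball wstar r)
    (hgt : ∀ t, 0 ≤ t → f wstar < f (w t)) :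
    ∃ K > 0, ∀ t : ℝ, 1 ≤ t →
      f (w t) - f wstar ≤ K * t ^ (-(1 / (2 * α - 1)) : ℝ) := by
  obtain ⟨hα1, hα2⟩ := hα
  set β : ℝ := 2 * α - 1 with hβ
  have hβpos : 0 < β := by simp only [hβ]; linarith
  set g : ℝ → ℝ := fun t => f (w t) - f wstar with hgdef
  have hgpos : ∀ t, 0 ≤ t → 0 < g t := fun t ht => sub_pos.mpr (hgt t ht)
  -- derivative of g
  have hgderiv : ∀ t, 0 ≤ t →
      HasDerivAt g (-‖gradient f (w t)‖ ^ 2) t := by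
    intro t ht
    have hdiff : DifferentiableAt ℝ f (w t) := (hf.differentiable one_ne_zero).differentiableAt
    have hgrad := hdiff.hasGradientAt
    have hfd : HasFDerivAt f ((InnerProductSpace.toDual ℝ _) (gradient f (w t))) (w t) :=
      hgrad.hasFDerivAt
    have := hfd.comp_hasDerivAt t (hflow t ht)
    have heq : (InnerProductSpace.toDual ℝ _) (gradient f (w t)) (-(gradient f (w t)))
        = -‖gradient f (w t)‖ ^ 2 := by
      rw [InnerProductSpace.toDual_apply_apply, inner_neg_right, real_inner_self_eq_norm_sq]
    rw [heq] at this
    exact this.sub_const (f wstar)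
  -- gradient lower bound
  have hgradlb : ∀ t, 0 ≤ t → (g t) ^ α / C ≤ ‖gradient f (w t)‖ := by
    intro t ht
    have h1 := hLI (w t) (hball t ht)
    rw [abs_of_pos (hgpos t ht)] at h1
    rw [div_le_iff₀ hC] at *
    linarith [h1]
  -- squared bound
  have hsq : ∀ t, 0 ≤ t → ((g t) ^ α / C) ^ 2 ≤ ‖gradient f (w t)‖ ^ 2 := by
    intro t ht
    have h0 : (0:ℝ) ≤ (g t) ^ α / C :=
      div_nonneg (Real.rpow_nonneg (hgpos t ht).le α) hC.le
    exact pow_le_pow_left₀ h0 (hgradlb t ht) 2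
  set c : ℝ := β / C ^ 2 with hc
  have hcpos : 0 < c := div_pos hβpos (pow_pos hC 2)
  -- h t = g t ^ (-β)
  set h : ℝ → ℝ := fun t => (g t) ^ (-β) with hhdef
  have hhderiv : ∀ t, 0 ≤ t → ∃ d, HasDerivAt h d t ∧ c ≤ d := by
    intro t ht
    have hgt0 := hgpos t ht
    have := (hgderiv t ht).rpow_const (p := -β) (Or.inl hgt0.ne')
    refine ⟨_, this, ?_⟩
    -- d = (-‖∇f‖²) * (-β) * g^(-β-1)
    have hkey : ((g t) ^ α / C) ^ 2 * β * (g t) ^ (-β - 1) = c := by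
      rw [div_pow, div_mul_eq_mul_div, div_mul_eq_mul_div, hc]
      congr 1
      have : ((g t) ^ α) ^ 2 = (g t) ^ (2 * α) := by
        rw [← Real.rpow_natCast ((g t) ^ α) 2, ← Real.rpow_mul hgt0.le]
        norm_num [mul_comm]
      rw [this, mul_right_comm, ← Real.rpow_add hgt0]
      have : 2 * α + (-β - 1) = 0 := by rw [hβ]; ring
      rw [this, Real.rpow_zero, one_mul]
    calc c = ((g t) ^ α / C) ^ 2 * β * (g t) ^ (-β - 1) := hkey.symm
      _ ≤ ‖gradient f (w t)‖ ^ 2 * β * (g t) ^ (-β - 1) := by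
          apply mul_le_mul_of_nonneg_right (mul_le_mul_of_nonneg_right (hsq t ht) hβpos.le)
            (Real.rpow_nonneg hgt0.le _)
      _ = -‖gradient f (w t)‖ ^ 2 * -β * (g t) ^ (-β - 1) := by ring
  -- F t = h t - c * t is monotone on Ici 0
  set F : ℝ → ℝ := fun t => h t - c * t with hFdef
  have hFderiv : ∀ t ∈ interior (Set.Ici (0:ℝ)), ∃ d, HasDerivAt F d t ∧ 0 ≤ d := by
    intro t ht
    rw [interior_Ici] at ht
    obtain ⟨d, hd, hcd⟩ := hhderiv t (le_of_lt ht)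
    exact ⟨d - c, hd.sub ((hasDerivAt_id t).const_mul c |>.congr_deriv (by ring)), by linarith⟩
  have hFcont : ContinuousOn F (Set.Ici 0) := by
    intro t ht
    obtain ⟨d, hd, _⟩ := hhderiv t ht
    exact ((hd.continuousAt.sub (continuous_const.mul continuous_id).continuousAt)).continuousWithinAt
  have hFmono : MonotoneOn F (Set.Ici 0) := by
    apply monotoneOn_of_deriv_nonneg (convex_Ici 0) hFcont
    · intro t ht
      obtain ⟨d, hd, _⟩ := hFderiv t ht
      exact hd.differentiableAt.differentiableWithinAt
    · intro t ht
      obtain ⟨d, hd, hd0⟩ := hFderiv t ht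
      rw [hd.deriv]; exact hd0
  -- for t ≥ 1 : h t ≥ c * t  (since h 0 > 0 and F t ≥ F 0)
  have hht : ∀ t : ℝ, 1 ≤ t → c * t ≤ h t := by
    intro t ht
    have h0 : (0:ℝ) ≤ t := by linarith
    have := hFmono (Set.self_mem_Ici) h0 h0
    have hh0 : 0 < h 0 := Real.rpow_pos_of_pos (hgpos 0 le_rfl) _
    simp only [hFdef] at this
    nlinarith
  refine ⟨c ^ (-(1/β)), Real.rpow_pos_of_pos hcpos _, ?_⟩
  intro t ht
  have htpos : (0:ℝ) < t := lt_of_lt_of_le one_pos ht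
  have h0 : (0:ℝ) ≤ t := htpos.le
  have hgt0 := hgpos t h0
  have hct : 0 < c * t := mul_pos hcpos htpos
  have key : g t ≤ (c * t) ^ (-(1/β)) := by
    have h1 : (c * t) ≤ (g t) ^ (-β) := hht t ht
    have h2 := Real.rpow_le_rpow_of_nonpos hct h1 (neg_nonpos.mpr (by positivity) : -(1/β) ≤ 0)
    calc g t = ((g t) ^ (-β)) ^ (-(1/β)) := by
          rw [← Real.rpow_mul hgt0.le]
          rw [show (-β) * (-(1/β)) = 1 by field_simp]
          exact (Real.rpow_one _).symm
      _ ≤ (c * t) ^ (-(1/β)) := h2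
  calc g t ≤ (c * t) ^ (-(1/β)) := key
    _ = c ^ (-(1/β)) * t ^ (-(1/β)) := Real.mul_rpow hcpos.le h0
    _ = c ^ (-(1/β)) * t ^ (-(1/(2*α-1))) := by rw [hβ]
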